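/- For m, k, t ≥ 0 with k ≤ m, the set of polynomials {e_λ(x_1,...,x_m)·s_ν(x_{m-k+1},...,x_m) : λ a partition with parts ≤ m and at most χ parts, ν a partition fitting inside the k×(m-k) rectangle}, where χ = t if ν_1 < m-k and χ = t-1 if ν_1 = m-k, is linearly independent in F[x_1,...,x_m] over a field F of characteristic 0. -/

import Mathlib

attribute [local instance] Classical.propDecidable

/-- Semistandard fillings of the Young diagram `ν` with entries in
`{0,…,k-1}`, encoded as functions on the cells of `ν`. -/
noncomputable def ssytFuns (ν : YoungDiagram) (k : ℕ) : Finset (↥ν.cells → Fin k) :=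
  Finset.univ.filter fun T =>
    (∀ a b : ↥ν.cells, (a : ℕ × ℕ).1 = (b : ℕ × ℕ).1 → (a : ℕ × ℕ).2 ≤ (b : ℕ × ℕ).2 →
        T a ≤ T b) ∧
    (∀ a b : ↥ν.cells, (a : ℕ × ℕ).2 = (b : ℕ × ℕ).2 → (a : ℕ × ℕ).1 < (b : ℕ × ℕ).1 →
        T a < T b)

/-- The Schur polynomial `s_ν` in the `k` variables `x_{v(0)},…,x_{v(k-1)}`. -/
noncomputable def schurPoly (F : Type*) [Field F] (m : ℕ) (ν : YoungDiagram)
    (k : ℕ) (v : Fin k → Fin m) : MvPolynomial (Fin m) F :=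
  ∑ T ∈ ssytFuns ν k, ∏ a : ↥ν.cells, MvPolynomial.X (v (T a))

namespace LAux

open MvPolynomial Finset

variable {F : Type*} [Field F]

/-- Exponent of `∏_{i<m} x_i`. -/
noncomputable def wm (m : ℕ) : ℕ →₀ ℕ := ∑ i ∈ Finset.range m, Finsupp.single i 1

lemma wm_apply (m j : ℕ) : wm m j = if j < m then 1 else 0 := by
  classical
  rw [wm, Finsupp.finset_sum_apply]
  simp only [Finsupp.single_apply]
  rw [Finset.sum_ite_eq' (Finset.range m) j (fun _ => 1)]
  simp [Finset.mem_range]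

/-- The product of all variables `x_0 ⋯ x_{m-1}`. -/
noncomputable def Pm (F : Type*) [Field F] (m : ℕ) : MvPolynomial ℕ F :=
  monomial (wm m) 1

noncomputable def eN (F : Type*) [Field F] (m d : ℕ) : MvPolynomial ℕ F :=
  ∑ S ∈ (Finset.range m).powersetCard d, ∏ i ∈ S, X i

noncomputable def sN (F : Type*) [Field F] (m k : ℕ) (ν : YoungDiagram) :
    MvPolynomial ℕ F :=
  ∑ T ∈ ssytFuns ν k, ∏ a : ↥ν.cells, X (m - k + (T a : ℕ))

/-- Substitute `x_j := 0`. -/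
noncomputable def subT (F : Type*) [Field F] (j : ℕ) :
    MvPolynomial ℕ F →ₐ[F] MvPolynomial ℕ F :=
  aeval (fun l => if l = j then 0 else X l)

/-- Substitute `x_0 := 0` and shift all other variables down by one. -/
noncomputable def psiT (F : Type*) [Field F] :
    MvPolynomial ℕ F →ₐ[F] MvPolynomial ℕ F :=
  aeval (fun l => if l = 0 then 0 else X (l - 1))

/-- Invariance under all permutations of the variables `x_0,…,x_{m-1}`. -/
def SymN (m : ℕ) (f : MvPolynomial ℕ F) : Prop :=
  ∀ i j : ℕ, i < m → j < m → rename (⇑(Equiv.swap i j)) f = f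

/-- Strip the first column of a Young diagram. -/
def bar (ν : YoungDiagram) : YoungDiagram where
  cells := (ν.cells.filter (fun c => 1 ≤ c.2)).image (fun c => (c.1, c.2 - 1))
  isLowerSet := by
    rintro ⟨a, b⟩ ⟨c, d⟩ ⟨h1, h2⟩ hm
    simp only [Finset.coe_image, Finset.coe_filter, Set.mem_image, Set.mem_setOf_eq,
      Finset.mem_coe, YoungDiagram.mem_cells] at hm ⊢
    obtain ⟨⟨u, v⟩, ⟨huv, hv⟩, heq⟩ := hm
    obtain ⟨rfl, rfl⟩ : u = a ∧ v - 1 = b := by simpa [Prod.ext_iff] using heq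
    simp only at h1 h2 hv
    refine ⟨(c, d + 1), ⟨?_, by omega⟩, by simp⟩
    exact ν.isLowerSet (a := (u, v)) ⟨by simpa using h1, by simp; omega⟩ huv

lemma mem_bar {ν : YoungDiagram} {c : ℕ × ℕ} : c ∈ bar ν ↔ (c.1, c.2 + 1) ∈ ν := by
  obtain ⟨i, j⟩ := c
  constructor
  · intro h
    have h' : (i, j) ∈ (bar ν).cells := h
    simp only [bar, Finset.mem_image, Finset.mem_filter, YoungDiagram.mem_cells] at h'
    obtain ⟨⟨u, v⟩, ⟨huv, hv⟩, heq⟩ := h'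
    obtain ⟨rfl, rfl⟩ : u = i ∧ v - 1 = j := by simpa [Prod.ext_iff] using heq
    simp only at hv ⊢
    have : v - 1 + 1 = v := by omega
    rwa [this]
  · intro h
    show (i, j) ∈ (bar ν).cells
    simp only [bar, Finset.mem_image, Finset.mem_filter, YoungDiagram.mem_cells]
    exact ⟨(i, j + 1), ⟨h, by omega⟩, by simp⟩

section PolyLemmas

lemma subT_monomial (j : ℕ) (u : ℕ →₀ ℕ) (c : F) :
    subT F j (monomial u c) = if u j = 0 then monomial u c else 0 := by
  rw [subT, aeval_monomial]
  split_ifs with h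
  · rw [monomial_eq, algebraMap_eq]
    congr 1
    apply Finsupp.prod_congr
    intro n hn
    have hnj : n ≠ j := by
      intro e; subst e; exact (Finsupp.mem_support_iff.mp hn) h
    simp [hnj]
  · have hj : j ∈ u.support := Finsupp.mem_support_iff.mpr h
    rw [Finsupp.prod, Finset.prod_eq_zero hj (by simp [zero_pow h]), mul_zero]

lemma support_cond_of_subT_eq_zero {j : ℕ} {f : MvPolynomial ℕ F}
    (h : subT F j f = 0) : ∀ u ∈ f.support, u j ≠ 0 := by
  intro u hu hj
  have hf : subT F j f
      = ∑ v ∈ f.support, if v j = 0 then monomial v (coeff v f) else 0 := by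
    conv_lhs => rw [f.as_sum]
    rw [map_sum]
    exact Finset.sum_congr rfl fun v _ => subT_monomial j v _
  have hc : coeff u (subT F j f) = coeff u f := by
    rw [hf, coeff_sum, Finset.sum_eq_single u]
    · simp [hj, coeff_monomial]
    · intro v hv hvu
      split_ifs with h'
      · simp [coeff_monomial, hvu]
      · simp
    · intro h'; exact absurd hu h'
  rw [h, coeff_zero] at hc
  exact (mem_support_iff.mp hu) hc.symm

lemma monomial_one_dvd {w : ℕ →₀ ℕ} {f : MvPolynomial ℕ F}
    (h : ∀ u ∈ f.support, w ≤ u) : monomial w (1 : F) ∣ f := by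
  rw [monomial_one_dvd_iff_modMonomial_eq_zero]
  apply MvPolynomial.ext
  intro u
  rw [coeff_zero]
  by_cases hle : w ≤ u
  · rw [coeff_modMonomial_of_le _ hle]
  · rw [coeff_modMonomial_of_not_le _ hle]
    by_contra hc
    exact hle (h u (mem_support_iff.mpr hc))

lemma subT_swap {i j : ℕ} {f : MvPolynomial ℕ F}
    (hf : rename (⇑(Equiv.swap i j)) f = f) (h : subT F j f = 0) :
    subT F i f = 0 := by
  have h1 : subT F i f
      = aeval (fun l => if l = j then 0 else X ((Equiv.swap i j) l)) f := by
    conv_lhs => rw [← hf]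
    rw [subT, aeval_rename]
    have hfun : ((fun l => if l = i then 0 else X l) ∘ ⇑(Equiv.swap i j))
        = (fun l => if l = j then 0 else (X ((Equiv.swap i j) l) : MvPolynomial ℕ F)) := by
      funext l
      simp only [Function.comp_apply]
      by_cases hl : l = j
      · subst hl; simp [Equiv.swap_apply_right]
      · have : Equiv.swap i j l ≠ i := by
          intro e
          apply hl
          have := congrArg (Equiv.swap i j) e
          rwa [Equiv.swap_apply_self, Equiv.swap_apply_left] at this
        simp [this, hl]
    rw [hfun]
  have h2 : rename (⇑(Equiv.swap i j)) (subT F j f)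
      = aeval (fun l => if l = j then 0 else X ((Equiv.swap i j) l)) f := by
    rw [subT, ← AlgHom.comp_apply, comp_aeval]
    have hfun : (fun l => rename (⇑(Equiv.swap i j)) (if l = j then 0 else (X l : MvPolynomial ℕ F)))
        = (fun l => if l = j then 0 else (X ((Equiv.swap i j) l) : MvPolynomial ℕ F)) := by
      funext l
      by_cases hl : l = j <;> simp [hl]
    rw [hfun]
  rw [h1, ← h2, h, map_zero]

lemma subT_zero_of_psiT {f : MvPolynomial ℕ F} (h : psiT F f = 0) :
    subT F 0 f = 0 := by
  have hcomp : (subT F 0) = (rename Nat.succ).comp (psiT F) := by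
    apply algHom_ext
    intro l
    simp only [subT, psiT, AlgHom.comp_apply, aeval_X]
    by_cases hl : l = 0
    · simp [hl]
    · rw [if_neg hl, if_neg hl, rename_X]
      congr 1
      omega
  rw [hcomp, AlgHom.comp_apply, h, map_zero]

end PolyLemmas

section SymLemmas

lemma SymN.finsetSum {α : Type*} {m : ℕ} {s : Finset α} {g : α → MvPolynomial ℕ F}
    (h : ∀ a ∈ s, SymN m (g a)) : SymN m (∑ a ∈ s, g a) := by
  intro i j hi hj
  rw [map_sum]
  exact Finset.sum_congr rfl fun a ha => h a ha i j hi hj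

lemma SymN.smul {m : ℕ} {c : F} {g : MvPolynomial ℕ F} (h : SymN m g) :
    SymN m (c • g) := by
  intro i j hi hj
  rw [map_smul, h i j hi hj]

lemma symN_subT {m : ℕ} {f : MvPolynomial ℕ F} (hf : SymN m f) :
    SymN (m - 1) (subT F (m - 1) f) := by
  intro i j hi hj
  have hcomm : (rename (⇑(Equiv.swap i j))).comp (subT F (m-1))
      = (subT F (m-1)).comp (rename (⇑(Equiv.swap i j))) := by
    apply algHom_ext
    intro l
    simp only [AlgHom.comp_apply, rename_X, subT, aeval_X]
    have hl1 : Equiv.swap i j (m-1) = m-1 :=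
      Equiv.swap_apply_of_ne_of_ne (by omega) (by omega)
    by_cases hl : l = m-1
    · subst hl; simp [hl1]
    · have hne : Equiv.swap i j l ≠ m - 1 := by
        intro e
        apply hl
        have := congrArg (Equiv.swap i j) e
        rwa [Equiv.swap_apply_self, hl1] at this
      rw [if_neg hl, if_neg hne, rename_X]
  have hfi := congrArg (fun (φ : MvPolynomial ℕ F →ₐ[F] MvPolynomial ℕ F) => φ f) hcomm
  simp only [AlgHom.comp_apply] at hfi
  rw [hfi, hf i j (by omega) (by omega)]

lemma symN_psiT {m : ℕ} {f : MvPolynomial ℕ F} (hf : SymN m f) :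
    SymN (m - 1) (psiT F f) := by
  intro i j hi hj
  have hcomm : (rename (⇑(Equiv.swap i j))).comp (psiT F)
      = (psiT F).comp (rename (⇑(Equiv.swap (i+1) (j+1)))) := by
    apply algHom_ext
    intro l
    simp only [AlgHom.comp_apply, rename_X, psiT, aeval_X]
    by_cases hl : l = 0
    · subst hl
      have : Equiv.swap (i+1) (j+1) 0 = 0 :=
        Equiv.swap_apply_of_ne_of_ne (by omega) (by omega)
      simp [this]
    · have hσ : Equiv.swap (i+1) (j+1) l ≠ 0 := by
        intro e
        apply hl
        have := congrArg (Equiv.swap (i+1) (j+1)) e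
        rwa [Equiv.swap_apply_self,
          Equiv.swap_apply_of_ne_of_ne (by omega) (by omega)] at this
      rw [if_neg hl, if_neg hσ, rename_X]
      congr 1
      rcases eq_or_ne l (i+1) with rfl | hli
      · rw [Equiv.swap_apply_left]
        simp [Equiv.swap_apply_left]
      · rcases eq_or_ne l (j+1) with rfl | hlj
        · rw [Equiv.swap_apply_right]
          simp [Equiv.swap_apply_right]
        · rw [Equiv.swap_apply_of_ne_of_ne hli hlj,
            Equiv.swap_apply_of_ne_of_ne (by omega) (by omega)]
  have hfi := congrArg (fun (φ : MvPolynomial ℕ F →ₐ[F] MvPolynomial ℕ F) => φ f) hcomm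
  simp only [AlgHom.comp_apply] at hfi
  rw [hfi, hf (i+1) (j+1) (by omega) (by omega)]

lemma swap_mem_range {i j m l : ℕ} (hi : i < m) (hj : j < m) (hl : l < m) :
    Equiv.swap i j l < m := by
  rcases eq_or_ne l i with rfl | h1
  · rwa [Equiv.swap_apply_left]
  · rcases eq_or_ne l j with rfl | h2
    · rwa [Equiv.swap_apply_right]
    · rwa [Equiv.swap_apply_of_ne_of_ne h1 h2]

lemma symN_eN (m d : ℕ) : SymN m (eN F m d) := by
  intro i j hi hj
  rw [eN, map_sum]
  have key : ∀ S ∈ (Finset.range m).powersetCard d,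
      S.image (⇑(Equiv.swap i j)) ∈ (Finset.range m).powersetCard d := by
    intro S hS
    rw [Finset.mem_powersetCard] at hS ⊢
    refine ⟨?_, by rw [Finset.card_image_of_injective _ (Equiv.injective _), hS.2]⟩
    intro x hx
    obtain ⟨y, hy, rfl⟩ := Finset.mem_image.mp hx
    exact Finset.mem_range.mpr (swap_mem_range hi hj (Finset.mem_range.mp (hS.1 hy)))
  refine Finset.sum_bij' (fun S _ => S.image (⇑(Equiv.swap i j)))
    (fun S _ => S.image (⇑(Equiv.swap i j))) key key ?_ ?_ ?_
  · intro S hS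
    simp only [Finset.image_image]
    have h2 : (⇑(Equiv.swap i j)) ∘ (⇑(Equiv.swap i j)) = id := by
      funext x; simp [Equiv.swap_apply_self]
    rw [h2, Finset.image_id]
  · intro S hS
    simp only [Finset.image_image]
    have h2 : (⇑(Equiv.swap i j)) ∘ (⇑(Equiv.swap i j)) = id := by
      funext x; simp [Equiv.swap_apply_self]
    rw [h2, Finset.image_id]
  · intro S hS
    rw [map_prod, Finset.prod_image]
    · exact Finset.prod_congr rfl fun l _ => by rw [rename_X]
    · intro a _ b _ hab
      exact Equiv.injective _ hab

lemma prodX_eq (s : Finset ℕ) :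
    ∏ i ∈ s, (X i : MvPolynomial ℕ F) = monomial (∑ i ∈ s, Finsupp.single i 1) 1 := by
  classical
  induction s using Finset.induction_on with
  | empty => simp
  | insert _ _ ha ih =>
    rename_i a s
    rw [Finset.prod_insert ha, Finset.sum_insert ha, ih]
    rw [X, monomial_mul, mul_one]

lemma eN_self (m : ℕ) : eN F m m = Pm F m := by
  have h : (Finset.range m).powersetCard m = {Finset.range m} := by
    have := Finset.powersetCard_self (Finset.range m)
    rwa [Finset.card_range] at this
  rw [eN, h, Finset.sum_singleton, prodX_eq, Pm, wm]

lemma eN_zero_of_lt {m d : ℕ} (h : m < d) : eN F m d = 0 := by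
  rw [eN, Finset.powersetCard_eq_empty.mpr (by simpa using h), Finset.sum_empty]

lemma Pm_ne_zero (m : ℕ) : Pm F m ≠ 0 := by
  rw [Pm, Ne, monomial_eq_zero]
  exact one_ne_zero

lemma symN_Pm (m : ℕ) : SymN m (Pm F m) := by
  rw [← eN_self]; exact symN_eN m m

lemma wm_sum_pos {m : ℕ} (hm : 0 < m) : 1 ≤ (wm m).sum fun _ e => e := by
  have h0 : wm m 0 = 1 := by rw [wm_apply]; simp [hm]
  have hmem : (0 : ℕ) ∈ (wm m).support := Finsupp.mem_support_iff.mpr (by omega)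
  calc (1 : ℕ) = wm m 0 := h0.symm
    _ ≤ ∑ a ∈ (wm m).support, wm m a :=
        Finset.single_le_sum (fun _ _ => Nat.zero_le _) hmem
    _ = (wm m).sum fun _ e => e := rfl

lemma exists_sym_factor {m : ℕ} (hm : 0 < m) {f : MvPolynomial ℕ F} (hf : SymN m f)
    {j0 : ℕ} (hj0 : j0 < m) (h : subT F j0 f = 0) :
    ∃ g, f = Pm F m * g ∧ SymN m g ∧ (f ≠ 0 → g.totalDegree + 1 ≤ f.totalDegree) := by
  have hall : ∀ i, i < m → subT F i f = 0 := by
    intro i him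
    exact subT_swap (hf i j0 him hj0) h
  have hsupp : ∀ u ∈ f.support, wm m ≤ u := by
    intro u hu
    rw [Finsupp.le_def]
    intro a
    rw [wm_apply]
    by_cases ha : a < m
    · rw [if_pos ha]
      have := support_cond_of_subT_eq_zero (hall a ha) u hu
      omega
    · simp [ha]
  obtain ⟨g, hg⟩ := monomial_one_dvd hsupp
  have hPg : f = Pm F m * g := hg
  have hsymg : SymN m g := by
    intro i j hi hj
    have h1 : Pm F m * rename (⇑(Equiv.swap i j)) g = Pm F m * g :=
      calc Pm F m * rename (⇑(Equiv.swap i j)) g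
          = rename (⇑(Equiv.swap i j)) (Pm F m * g) := by
            rw [map_mul, symN_Pm m i j hi hj]
        _ = rename (⇑(Equiv.swap i j)) f := by rw [← hPg]
        _ = f := hf i j hi hj
        _ = Pm F m * g := hPg
    exact mul_left_cancel₀ (Pm_ne_zero m) h1
  refine ⟨g, hPg, hsymg, ?_⟩
  intro hf0
  have hg0 : g ≠ 0 := by rintro rfl; rw [mul_zero] at hPg; exact hf0 hPg
  obtain ⟨u, hu, hud⟩ := Finset.exists_mem_eq_sup g.support
    (Finset.nonempty_iff_ne_empty.mpr (mt MvPolynomial.support_eq_empty.mp hg0)) (fun s => s.sum fun _ e => e)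
  have hcoeff : coeff (wm m + u) f ≠ 0 := by
    rw [hPg, Pm, coeff_monomial_mul, one_mul]
    exact mem_support_iff.mp hu
  have hle := le_totalDegree (mem_support_iff.mpr hcoeff)
  have hadd : ((wm m + u).sum fun _ e => e)
      = ((wm m).sum fun _ e => e) + (u.sum fun _ e => e) :=
    Finsupp.sum_add_index' (fun _ => rfl) (fun _ _ _ => rfl)
  have h1 := wm_sum_pos hm
  have h2 : g.totalDegree = u.sum fun _ e => e := by rw [totalDegree]; exact hud
  omega

end SymLemmas

section SsytLemmas

lemma mem_ssytFuns {ν : YoungDiagram} {k : ℕ} {T : ↥ν.cells → Fin k} :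
    T ∈ ssytFuns ν k ↔
      (∀ a b : ↥ν.cells, (a : ℕ × ℕ).1 = (b : ℕ × ℕ).1 → (a : ℕ × ℕ).2 ≤ (b : ℕ × ℕ).2 →
          T a ≤ T b) ∧
      (∀ a b : ↥ν.cells, (a : ℕ × ℕ).2 = (b : ℕ × ℕ).2 → (a : ℕ × ℕ).1 < (b : ℕ × ℕ).1 →
          T a < T b) := by
  rw [ssytFuns, Finset.mem_filter]
  simp only [Finset.mem_univ, true_and]

lemma cell_mem {ν : YoungDiagram} (a : ↥ν.cells) :
    (((a : ℕ × ℕ).1, (a : ℕ × ℕ).2) : ℕ × ℕ) ∈ ν := by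
  rw [Prod.mk.eta]
  exact (YoungDiagram.mem_cells _).mp a.2

lemma ssyt_row_le {ν : YoungDiagram} {k : ℕ} {T : ↥ν.cells → Fin k}
    (hT : T ∈ ssytFuns ν k) : ∀ a : ↥ν.cells, (a : ℕ × ℕ).1 ≤ (T a : ℕ) := by
  obtain ⟨hrow, hcol⟩ := mem_ssytFuns.mp hT
  suffices h : ∀ i, ∀ a : ↥ν.cells, (a : ℕ × ℕ).1 = i → i ≤ (T a : ℕ) by
    intro a; exact h _ a rfl
  intro i
  induction i with
  | zero => intro a _; exact Nat.zero_le _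
  | succ n ih =>
    intro a ha
    have hcell : ((n, (a : ℕ × ℕ).2) : ℕ × ℕ) ∈ ν :=
      ν.up_left_mem (by omega) le_rfl (cell_mem a)
    set b : ↥ν.cells := ⟨(n, (a : ℕ × ℕ).2), (YoungDiagram.mem_cells _).mpr hcell⟩ with hb
    have h1 : n ≤ (T b : ℕ) := ih b rfl
    have h2 : T b < T a := hcol b a rfl (by rw [hb]; simp; omega)
    rw [Fin.lt_def] at h2
    omega

lemma ssytFuns_eq_empty {ν : YoungDiagram} {k : ℕ} (h : k < ν.colLen 0) :
    ssytFuns ν k = ∅ := by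
  rw [Finset.eq_empty_iff_forall_notMem]
  intro T hT
  have hcell : ((k, 0) : ℕ × ℕ) ∈ ν := YoungDiagram.mem_iff_lt_colLen.mpr h
  set a : ↥ν.cells := ⟨(k, 0), (YoungDiagram.mem_cells _).mpr hcell⟩
  have h1 := ssyt_row_le hT a
  have h2 := (T a).isLt
  simp only [a] at h1
  omega

lemma sN_zero {m k : ℕ} {ν : YoungDiagram} (h : k < ν.colLen 0) : sN F m k ν = 0 := by
  rw [sN, ssytFuns_eq_empty h, Finset.sum_empty]

lemma sN_bot (m k : ℕ) : sN F m k ⊥ = 1 := by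
  have hempty : IsEmpty ↥(⊥ : YoungDiagram).cells := by
    constructor; rintro ⟨c, hc⟩
    rw [YoungDiagram.cells_bot] at hc
    exact absurd hc (Finset.notMem_empty c)
  rw [sN]
  have h1 : ssytFuns ⊥ k = Finset.univ := by
    rw [ssytFuns, Finset.filter_true_of_mem]
    intro T _
    exact ⟨fun a => (hempty.elim a), fun a => (hempty.elim a)⟩
  rw [h1]
  haveI := hempty
  haveI : Unique (↥(⊥ : YoungDiagram).cells → Fin k) :=
    ⟨⟨fun a => (hempty.elim a)⟩, fun f => funext fun a => (hempty.elim a)⟩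
  rw [Finset.univ_unique, Finset.sum_singleton]
  exact Finset.prod_of_isEmpty _

lemma eq_bot_of_rowLen_zero {ν : YoungDiagram} (h : ν.rowLen 0 = 0) : ν = ⊥ := by
  apply le_antisymm ?_ bot_le
  rw [← YoungDiagram.cells_subset_iff]
  intro c hc
  exfalso
  rw [YoungDiagram.mem_cells] at hc
  have h0 : ((0, c.2) : ℕ × ℕ) ∈ ν := ν.up_left_mem (Nat.zero_le _) le_rfl (by
    rw [Prod.mk.eta] at *
    exact hc)
  have := YoungDiagram.mem_iff_lt_rowLen.mp h0
  omega

lemma eq_bot_of_colLen_zero {ν : YoungDiagram} (h : ν.colLen 0 = 0) : ν = ⊥ := by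
  apply le_antisymm ?_ bot_le
  rw [← YoungDiagram.cells_subset_iff]
  intro c hc
  exfalso
  rw [YoungDiagram.mem_cells] at hc
  have h0 : ((c.1, 0) : ℕ × ℕ) ∈ ν := ν.up_left_mem le_rfl (Nat.zero_le _) (by
    rw [Prod.mk.eta] at *
    exact hc)
  have := YoungDiagram.mem_iff_lt_colLen.mp h0
  omega

lemma psiT_sN {m k : ℕ} (hk : k < m) (ν : YoungDiagram) :
    psiT F (sN F m k ν) = sN F (m - 1) k ν := by
  rw [sN, map_sum, sN]
  apply Finset.sum_congr rfl
  intro T _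
  rw [map_prod]
  apply Finset.prod_congr rfl
  intro a _
  rw [psiT, aeval_X, if_neg (by omega : ¬ (m - k + ((T a : Fin k) : ℕ) = 0))]
  congr 1
  omega

set_option maxHeartbeats 5000000 in
lemma subT_sN {m k : ℕ} (hk1 : 1 ≤ k) (hkm : k ≤ m) (ν : YoungDiagram) :
    subT F (m - 1) (sN F m k ν) = sN F (m - 1) (k - 1) ν := by
  have hterm : ∀ T : ↥ν.cells → Fin k,
      subT F (m-1) (∏ a : ↥ν.cells, (X (m - k + (T a : ℕ)) : MvPolynomial ℕ F))
      = if ∀ a : ↥ν.cells, (T a : ℕ) ≠ k - 1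
        then ∏ a : ↥ν.cells, (X (m - k + (T a : ℕ)) : MvPolynomial ℕ F) else 0 := by
    intro T
    rw [map_prod]
    split_ifs with hcond
    · apply Finset.prod_congr rfl
      intro a _
      rw [subT, aeval_X, if_neg]
      have h1 := (T a).isLt
      have h2 := hcond a
      omega
    · push_neg at hcond
      obtain ⟨a, ha⟩ := hcond
      apply Finset.prod_eq_zero (Finset.mem_univ a)
      have h1 := (T a).isLt
      rw [subT, aeval_X, if_pos (by omega)]
  rw [sN, map_sum]
  rw [Finset.sum_congr rfl (fun T _ => hterm T)]
  rw [← Finset.sum_filter]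
  rw [sN]
  refine Finset.sum_bij'
    (fun (T : ↥ν.cells → Fin k) (hT : T ∈ (ssytFuns ν k).filter
        (fun T => ∀ a : ↥ν.cells, (T a : ℕ) ≠ k - 1)) =>
      (fun a => ⟨(T a : ℕ), by
        have h1 := (T a).isLt
        have h2 := (Finset.mem_filter.mp hT).2 a
        omega⟩ : ↥ν.cells → Fin (k-1)))
    (fun (U : ↥ν.cells → Fin (k-1)) (hU : U ∈ ssytFuns ν (k-1)) =>
      (fun a => ⟨(U a : ℕ), by have := (U a).isLt; omega⟩ : ↥ν.cells → Fin k))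
    ?_ ?_ ?_ ?_ ?_
  · intro T hT
    obtain ⟨hrow, hcol⟩ := mem_ssytFuns.mp (Finset.mem_filter.mp hT).1
    rw [mem_ssytFuns]
    constructor
    · intro a b h1 h2
      have := hrow a b h1 h2
      rw [Fin.le_def] at this ⊢
      exact this
    · intro a b h1 h2
      have := hcol a b h1 h2
      rw [Fin.lt_def] at this ⊢
      exact this
  · intro U hU
    rw [Finset.mem_filter]
    obtain ⟨hrow, hcol⟩ := mem_ssytFuns.mp hU
    refine ⟨?_, ?_⟩
    · rw [mem_ssytFuns]
      constructor
      · intro a b h1 h2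
        have := hrow a b h1 h2
        rw [Fin.le_def] at this ⊢
        exact this
      · intro a b h1 h2
        have := hcol a b h1 h2
        rw [Fin.lt_def] at this ⊢
        exact this
    · intro a
      have := (U a).isLt
      simp only
      omega
  · intro T hT; funext a; apply Fin.ext; rfl
  · intro U hU; funext a; apply Fin.ext; rfl
  · intro T hT
    apply Finset.prod_congr rfl
    intro a _
    congr 1
    simp only
    omega

lemma ssyt_first_col {ν : YoungDiagram} {k : ℕ} {T : ↥ν.cells → Fin k}
    (hT : T ∈ ssytFuns ν k) (hc : ν.colLen 0 = k) :
    ∀ a : ↥ν.cells, (a : ℕ × ℕ).2 = 0 → (T a : ℕ) = (a : ℕ × ℕ).1 := by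
  obtain ⟨hrow, hcol⟩ := mem_ssytFuns.mp hT
  suffices h : ∀ d, ∀ a : ↥ν.cells, (a : ℕ × ℕ).2 = 0 →
      (a : ℕ × ℕ).1 + d + 1 = k → (T a : ℕ) = (a : ℕ × ℕ).1 by
    intro a ha
    have hlt : (a : ℕ × ℕ).1 < k := by
      rw [← hc]
      rw [← ha]
      exact YoungDiagram.mem_iff_lt_colLen.mp (cell_mem a)
    exact h (k - 1 - (a : ℕ × ℕ).1) a ha (by omega)
  intro d
  induction d with
  | zero =>
    intro a ha hk
    have h1 := ssyt_row_le hT a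
    have h2 := (T a).isLt
    omega
  | succ n ih =>
    intro a ha hk
    have hbmem : (((a : ℕ × ℕ).1 + 1, 0) : ℕ × ℕ) ∈ ν :=
      YoungDiagram.mem_iff_lt_colLen.mpr (by omega)
    set b : ↥ν.cells := ⟨((a : ℕ × ℕ).1 + 1, 0), (YoungDiagram.mem_cells _).mpr hbmem⟩
      with hbdef
    have hTb : (T b : ℕ) = (a : ℕ × ℕ).1 + 1 := ih b rfl (by simp [hbdef]; omega)
    have hlt : T a < T b := hcol a b (by simp [hbdef, ha]) (by simp [hbdef])
    rw [Fin.lt_def] at hlt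
    have h1 := ssyt_row_le hT a
    omega

lemma rowLen_le_iff {μ : YoungDiagram} {i r : ℕ} : μ.rowLen i ≤ r ↔ ((i, r) : ℕ × ℕ) ∉ μ := by
  rw [YoungDiagram.mem_iff_lt_rowLen]
  constructor
  · intro h hlt; omega
  · intro h; omega

lemma colLen_le_iff {μ : YoungDiagram} {j r : ℕ} : μ.colLen j ≤ r ↔ ((r, j) : ℕ × ℕ) ∉ μ := by
  rw [YoungDiagram.mem_iff_lt_colLen]
  constructor
  · intro h hlt; omega
  · intro h; omega

lemma bar_colLen_le {ν : YoungDiagram} {k : ℕ} (h : ν.colLen 0 ≤ k) :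
    (bar ν).colLen 0 ≤ k := by
  rw [colLen_le_iff]
  intro hmem
  rw [mem_bar] at hmem
  have h2 : ((k, 0) : ℕ × ℕ) ∈ ν := ν.up_left_mem le_rfl (Nat.zero_le _) hmem
  have := YoungDiagram.mem_iff_lt_colLen.mp h2
  omega

lemma bar_rowLen_le {ν : YoungDiagram} {r : ℕ} (h : ν.rowLen 0 ≤ r + 1) :
    (bar ν).rowLen 0 ≤ r := by
  rw [rowLen_le_iff]
  intro hmem
  rw [mem_bar] at hmem
  have := YoungDiagram.mem_iff_lt_rowLen.mp hmem
  simp only at this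
  omega

lemma bar_inj {ν ν' : YoungDiagram} {k : ℕ} (h1 : ν.colLen 0 = k) (h2 : ν'.colLen 0 = k)
    (h : bar ν = bar ν') : ν = ν' := by
  have key : ∀ c : ℕ × ℕ, c ∈ ν ↔ c ∈ ν' := by
    rintro ⟨i, j⟩
    cases j with
    | zero =>
      rw [YoungDiagram.mem_iff_lt_colLen, YoungDiagram.mem_iff_lt_colLen, h1, h2]
    | succ n =>
      have e1 : ((i, n + 1) : ℕ × ℕ) ∈ ν ↔ ((i, n) : ℕ × ℕ) ∈ bar ν := by
        constructor
        · intro hmem; exact mem_bar.mpr hmem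
        · intro hmem; exact mem_bar.mp hmem
      have e2 : ((i, n + 1) : ℕ × ℕ) ∈ ν' ↔ ((i, n) : ℕ × ℕ) ∈ bar ν' := by
        constructor
        · intro hmem; exact mem_bar.mpr hmem
        · intro hmem; exact mem_bar.mp hmem
      rw [e1, e2, h]
  apply le_antisymm
  · rw [← YoungDiagram.cells_subset_iff]
    intro c hc
    rw [YoungDiagram.mem_cells] at hc ⊢
    exact (key c).mp hc
  · rw [← YoungDiagram.cells_subset_iff]
    intro c hc
    rw [YoungDiagram.mem_cells] at hc ⊢
    exact (key c).mpr hc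

lemma Pm_eq_prod (m : ℕ) : Pm F m = ∏ i ∈ Finset.range m, X i := by
  rw [prodX_eq, Pm, wm]

lemma Pm_split {m k : ℕ} (hk : k ≤ m) :
    Pm F m = (∏ i ∈ Finset.range (m - k), X i) * ∏ i ∈ Finset.range k, X (m - k + i) := by
  rw [Pm_eq_prod]
  have h1 : Finset.range m = Finset.Ico 0 m := by rw [Finset.range_eq_Ico]
  rw [h1, ← Finset.prod_Ico_consecutive _ (Nat.zero_le (m - k)) (by omega : m - k ≤ m)]
  congr 1
  · rw [← Finset.range_eq_Ico]
  · rw [Finset.prod_Ico_eq_prod_range]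
    have : m - (m - k) = k := by omega
    rw [this]

set_option maxHeartbeats 1600000 in
lemma sN_col_split {m k : ℕ} {ν : YoungDiagram} (hc : ν.colLen 0 = k) :
    sN F m k ν = (∏ i ∈ Finset.range k, X (m - k + i)) * sN F m k (bar ν) := by
  rw [sN, sN, Finset.mul_sum]
  refine Finset.sum_bij'
    (fun (T : ↥ν.cells → Fin k) (hT : T ∈ ssytFuns ν k) =>
      (fun b => T ⟨((b : ℕ × ℕ).1, (b : ℕ × ℕ).2 + 1), (YoungDiagram.mem_cells _).mpr
        (mem_bar.mp ((YoungDiagram.mem_cells _).mp b.2))⟩ : ↥(bar ν).cells → Fin k))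
    (fun (U : ↥(bar ν).cells → Fin k) (hU : U ∈ ssytFuns (bar ν) k) =>
      (fun a => if h0 : (a : ℕ × ℕ).2 = 0
        then (⟨(a : ℕ × ℕ).1, by
          rw [← hc]
          have := YoungDiagram.mem_iff_lt_colLen.mp
            (ν.up_left_mem le_rfl (Nat.zero_le _) (cell_mem a))
          exact this⟩ : Fin k)
        else U ⟨((a : ℕ × ℕ).1, (a : ℕ × ℕ).2 - 1), (YoungDiagram.mem_cells _).mpr
          (mem_bar.mpr (by
            have := cell_mem a
            have he : (a : ℕ × ℕ).2 - 1 + 1 = (a : ℕ × ℕ).2 := by omega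
            rw [he]
            exact this))⟩ : ↥ν.cells → Fin k))
    ?_ ?_ ?_ ?_ ?_
  · -- forward membership
    intro T hT
    obtain ⟨hrow, hcol⟩ := mem_ssytFuns.mp hT
    rw [mem_ssytFuns]
    constructor
    · intro a b h1 h2
      exact hrow _ _ (by simpa using h1) (by simpa using h2)
    · intro a b h1 h2
      exact hcol _ _ (by simpa using h1) (by simpa using h2)
  · -- backward membership
    intro U hU
    obtain ⟨hrow, hcol⟩ := mem_ssytFuns.mp hU
    rw [mem_ssytFuns]
    constructor
    · intro a b h1 h2
      beta_reduce
      by_cases ha0 : (a : ℕ × ℕ).2 = 0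
      · by_cases hb0 : (b : ℕ × ℕ).2 = 0
        · rw [dif_pos ha0, dif_pos hb0, Fin.le_def]
          simp [h1]
        · rw [dif_pos ha0, dif_neg hb0, Fin.le_def]
          simp only
          have hbmem : ((((b : ℕ × ℕ).1, (b : ℕ × ℕ).2 - 1)) : ℕ × ℕ) ∈ (bar ν).cells := by
            rw [YoungDiagram.mem_cells]
            apply mem_bar.mpr
            show ((b : ℕ × ℕ).1, (b : ℕ × ℕ).2 - 1 + 1) ∈ ν
            have he : (b : ℕ × ℕ).2 - 1 + 1 = (b : ℕ × ℕ).2 := by omega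
            rw [he]
            exact cell_mem b
          have hge := ssyt_row_le hU ⟨_, hbmem⟩
          simp only at hge
          exact le_trans (le_of_eq h1) hge
      · have hb0 : ¬ (b : ℕ × ℕ).2 = 0 := by omega
        rw [dif_neg ha0, dif_neg hb0]
        exact hrow _ _ (by simpa using h1) (by simp; omega)
    · intro a b h1 h2
      beta_reduce
      by_cases ha0 : (a : ℕ × ℕ).2 = 0
      · have hb0 : (b : ℕ × ℕ).2 = 0 := by omega
        rw [dif_pos ha0, dif_pos hb0, Fin.lt_def]
        simpa using h2
      · have hb0 : ¬ (b : ℕ × ℕ).2 = 0 := by omega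
        rw [dif_neg ha0, dif_neg hb0]
        exact hcol _ _ (by simp [h1]) (by simpa using h2)
  · -- left inverse
    intro T hT
    funext a
    beta_reduce
    by_cases ha0 : (a : ℕ × ℕ).2 = 0
    · rw [dif_pos ha0]
      apply Fin.ext
      rw [ssyt_first_col hT hc a ha0]
    · rw [dif_neg ha0]
      refine (congrArg T (Subtype.ext ?_)).symm
      simp only
      rw [Prod.ext_iff]
      exact ⟨rfl, by simp only; omega⟩
  · -- right inverse
    intro U hU
    funext b
    beta_reduce
    have hne : ¬ ((b : ℕ × ℕ).2 + 1 = 0) := by omega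
    rw [dif_neg hne]
    refine congrArg U (Subtype.ext ?_)
    simp only
    rw [Prod.ext_iff]
    exact ⟨rfl, by simp⟩
  · -- products match
    intro T hT
    rw [← Finset.prod_filter_mul_prod_filter_not Finset.univ
      (fun a : ↥ν.cells => (a : ℕ × ℕ).2 = 0)]
    congr 1
    · -- first column gives the prefactor
      refine Finset.prod_bij'
        (fun (a : ↥ν.cells) (ha : a ∈ Finset.univ.filter
            (fun a : ↥ν.cells => (a : ℕ × ℕ).2 = 0)) => (a : ℕ × ℕ).1)
        (fun (l : ℕ) (hl : l ∈ Finset.range k) =>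
          (⟨(l, 0), (YoungDiagram.mem_cells _).mpr
            (YoungDiagram.mem_iff_lt_colLen.mpr (by rw [hc]; exact Finset.mem_range.mp hl))⟩ :
            ↥ν.cells))
        ?_ ?_ ?_ ?_ ?_
      · intro a ha
        rw [Finset.mem_range, ← hc]
        have h0 := (Finset.mem_filter.mp ha).2
        have := YoungDiagram.mem_iff_lt_colLen.mp
          (ν.up_left_mem le_rfl (Nat.zero_le _) (cell_mem a))
        exact this
      · intro l hl
        rw [Finset.mem_filter]
        exact ⟨Finset.mem_univ _, rfl⟩
      · intro a ha
        have h0 := (Finset.mem_filter.mp ha).2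
        apply Subtype.ext
        simp only
        rw [Prod.ext_iff]
        exact ⟨rfl, h0.symm⟩
      · intro l hl
        rfl
      · intro a ha
        have h0 := (Finset.mem_filter.mp ha).2
        congr 1
        rw [ssyt_first_col hT hc a h0]
    · -- remaining cells give sN of bar
      refine Finset.prod_bij'
        (fun (a : ↥ν.cells) (ha : a ∈ Finset.univ.filter
            (fun a : ↥ν.cells => ¬ (a : ℕ × ℕ).2 = 0)) =>
          (⟨((a : ℕ × ℕ).1, (a : ℕ × ℕ).2 - 1), (YoungDiagram.mem_cells _).mpr
            (mem_bar.mpr (by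
              have := cell_mem a
              have h0 := (Finset.mem_filter.mp ha).2
              have he : (a : ℕ × ℕ).2 - 1 + 1 = (a : ℕ × ℕ).2 := by omega
              rw [he]
              exact this))⟩ : ↥(bar ν).cells))
        (fun (b : ↥(bar ν).cells) (hb : b ∈ Finset.univ) =>
          (⟨((b : ℕ × ℕ).1, (b : ℕ × ℕ).2 + 1), (YoungDiagram.mem_cells _).mpr
            (mem_bar.mp ((YoungDiagram.mem_cells _).mp b.2))⟩ : ↥ν.cells))
        ?_ ?_ ?_ ?_ ?_
      · intro a ha
        exact Finset.mem_univ _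
      · intro b hb
        rw [Finset.mem_filter]
        refine ⟨Finset.mem_univ _, by simp⟩
      · intro a ha
        have h0 := (Finset.mem_filter.mp ha).2
        apply Subtype.ext
        simp only
        rw [Prod.ext_iff]
        constructor
        · rfl
        · simp only
          omega
      · intro b hb
        apply Subtype.ext
        simp only
        rw [Prod.ext_iff]
        exact ⟨rfl, by simp⟩
      · intro a ha
        have h0 := (Finset.mem_filter.mp ha).2
        beta_reduce
        refine congrArg (fun t : Fin k => (X (m - k + (t : ℕ)) : MvPolynomial ℕ F))
          (congrArg T (Subtype.ext ?_))
        simp only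
        rw [Prod.ext_iff]
        exact ⟨rfl, by simp only; omega⟩

end SsytLemmas

section MoreHelpers

lemma subT_eq_sum (j : ℕ) (f : MvPolynomial ℕ F) :
    subT F j f = ∑ v ∈ f.support, if v j = 0 then monomial v (coeff v f) else 0 := by
  conv_lhs => rw [f.as_sum]
  rw [map_sum]
  exact Finset.sum_congr rfl fun v _ => subT_monomial j v _

lemma totalDegree_subT_le (j : ℕ) (f : MvPolynomial ℕ F) :
    (subT F j f).totalDegree ≤ f.totalDegree := by
  rw [subT_eq_sum]
  apply totalDegree_finsetSum_le
  intro v hv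
  split_ifs
  · exact le_trans (totalDegree_monomial_le _ _) (le_totalDegree hv)
  · simp

lemma totalDegree_aeval_le (g : ℕ → MvPolynomial ℕ F) (hg : ∀ l, (g l).totalDegree ≤ 1)
    (f : MvPolynomial ℕ F) : (aeval g f).totalDegree ≤ f.totalDegree := by
  conv_lhs => rw [f.as_sum]
  rw [map_sum]
  apply totalDegree_finsetSum_le
  intro v hv
  rw [aeval_monomial]
  refine le_trans (totalDegree_mul _ _) ?_
  rw [algebraMap_eq, totalDegree_C, zero_add]
  refine le_trans ?_ (le_totalDegree hv)
  rw [Finsupp.prod]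
  refine le_trans (totalDegree_finset_prod _ _) ?_
  have hterm : ∀ n ∈ v.support, ((g n) ^ (v n)).totalDegree ≤ v n := by
    intro n _
    refine le_trans (totalDegree_pow _ _) ?_
    have := hg n
    calc v n * (g n).totalDegree ≤ v n * 1 := Nat.mul_le_mul_left _ this
      _ = v n := Nat.mul_one _
  calc ∑ n ∈ v.support, ((g n) ^ (v n)).totalDegree ≤ ∑ n ∈ v.support, v n :=
        Finset.sum_le_sum hterm
    _ = v.sum fun _ e => e := rfl

lemma totalDegree_psiT_le (f : MvPolynomial ℕ F) :
    (psiT F f).totalDegree ≤ f.totalDegree := by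
  rw [psiT]
  apply totalDegree_aeval_le
  intro l
  split_ifs
  · simp
  · rw [totalDegree_X]

lemma symN_quot {m : ℕ} {f g : MvPolynomial ℕ F} (hsym : SymN m f)
    (heq : f = Pm F m * g) : SymN m g := by
  intro i j hi hj
  have h1 : Pm F m * rename (⇑(Equiv.swap i j)) g = Pm F m * g :=
    calc Pm F m * rename (⇑(Equiv.swap i j)) g
        = rename (⇑(Equiv.swap i j)) (Pm F m * g) := by
          rw [map_mul, symN_Pm m i j hi hj]
      _ = rename (⇑(Equiv.swap i j)) f := by rw [← heq]
      _ = f := hsym i j hi hj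
      _ = Pm F m * g := heq
  exact mul_left_cancel₀ (Pm_ne_zero m) h1

lemma deg_quot {m : ℕ} (hm : 0 < m) {g : MvPolynomial ℕ F} (hg : g ≠ 0) :
    g.totalDegree + 1 ≤ (Pm F m * g).totalDegree := by
  obtain ⟨u, hu, hud⟩ := Finset.exists_mem_eq_sup g.support
    (Finset.nonempty_iff_ne_empty.mpr (mt MvPolynomial.support_eq_empty.mp hg)) (fun s => s.sum fun _ e => e)
  have hcoeff : coeff (wm m + u) (Pm F m * g) ≠ 0 := by
    rw [Pm, coeff_monomial_mul, one_mul]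
    exact mem_support_iff.mp hu
  have hle := le_totalDegree (mem_support_iff.mpr hcoeff)
  have hadd : ((wm m + u).sum fun _ e => e)
      = ((wm m).sum fun _ e => e) + (u.sum fun _ e => e) :=
    Finsupp.sum_add_index' (fun _ => rfl) (fun _ _ _ => rfl)
  have h1 := wm_sum_pos hm
  have h2 : g.totalDegree = u.sum fun _ e => e := by rw [totalDegree]; exact hud
  omega

lemma Pm_dvd {m : ℕ} (hm : 0 < m) {f : MvPolynomial ℕ F} (hf : SymN m f)
    {j0 : ℕ} (hj0 : j0 < m) (h : subT F j0 f = 0) : Pm F m ∣ f := by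
  have hall : ∀ i, i < m → subT F i f = 0 := fun i him =>
    subT_swap (hf i j0 him hj0) h
  have hsupp : ∀ u ∈ f.support, wm m ≤ u := by
    intro u hu
    rw [Finsupp.le_def]
    intro a
    rw [wm_apply]
    by_cases ha : a < m
    · rw [if_pos ha]
      have := support_cond_of_subT_eq_zero (hall a ha) u hu
      omega
    · simp [ha]
  exact monomial_one_dvd hsupp

lemma E_ne_zero (m k : ℕ) : (∏ i ∈ Finset.range k, (X (m - k + i) : MvPolynomial ℕ F)) ≠ 0 := by
  rw [Finset.prod_ne_zero_iff]
  intro i _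
  exact X_ne_zero _

lemma psiT_Q {m k : ℕ} (hkm : k < m) :
    psiT F (∏ i ∈ Finset.range (m - k), X i) = 0 := by
  rw [map_prod]
  apply Finset.prod_eq_zero (Finset.mem_range.mpr (by omega : 0 < m - k))
  rw [psiT, aeval_X, if_pos rfl]

end MoreHelpers

section Star

lemma star : ∀ m : ℕ, ∀ N k : ℕ, k ≤ m →
    ∀ (A : Finset YoungDiagram) (f : YoungDiagram → MvPolynomial ℕ F),
    (∀ ν ∈ A, ν.rowLen 0 ≤ m - k ∧ ν.colLen 0 ≤ k ∧ SymN m (f ν) ∧ (f ν).totalDegree ≤ N) →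
    (∑ ν ∈ A, f ν * sN F m k ν) = 0 → ∀ ν ∈ A, f ν = 0 := by
  intro m
  induction m using Nat.strong_induction_on with
  | _ m ihm =>
  intro N
  induction N using Nat.strong_induction_on with
  | _ N ihN =>
  intro k hk A f hmem hsum
  by_cases hbase : k = 0 ∨ k = m
  · have hbot : ∀ ν ∈ A, ν = ⊥ := by
      intro ν hν
      rcases hbase with rfl | rfl
      · exact eq_bot_of_colLen_zero (Nat.le_zero.mp (hmem ν hν).2.1)
      · exact eq_bot_of_rowLen_zero (Nat.le_zero.mp (by
          have := (hmem ν hν).1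
          omega))
    have hsub : A ⊆ {⊥} := fun ν hν => Finset.mem_singleton.mpr (hbot ν hν)
    intro ν hν
    have hνbot := hbot ν hν
    subst hνbot
    rcases Finset.subset_singleton_iff.mp hsub with rfl | hA
    · exact absurd hν (Finset.notMem_empty _)
    · rw [hA, Finset.sum_singleton, sN_bot, mul_one] at hsum
      exact hsum
  push_neg at hbase
  obtain ⟨hk0, hkm⟩ := hbase
  have hk1 : 1 ≤ k := Nat.one_le_iff_ne_zero.mpr hk0
  have hkm1 : k < m := lt_of_le_of_ne hk hkm
  have hm1 : 0 < m := by omega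
  -- Step 1: kill the top variable; short diagrams get divisible coefficients
  have hstep1 : ∀ ν ∈ A, ν.colLen 0 ≤ k - 1 → subT F (m-1) (f ν) = 0 := by
    have happ := congrArg (⇑(subT F (m-1))) hsum
    rw [map_sum, map_zero] at happ
    have happ2 : ∑ ν ∈ A, subT F (m-1) (f ν) * sN F (m-1) (k-1) ν = 0 := by
      rw [← happ]
      apply Finset.sum_congr rfl
      intro ν hν
      rw [map_mul, subT_sN hk1 hk]
    have happ3 : ∑ ν ∈ A.filter (fun ν => ν.colLen 0 ≤ k - 1),
        subT F (m-1) (f ν) * sN F (m-1) (k-1) ν = 0 := by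
      rw [← happ2]
      apply Finset.sum_subset (Finset.filter_subset _ _)
      intro ν hν hnot
      rw [Finset.mem_filter] at hnot
      have hcl : k - 1 < ν.colLen 0 := by
        rcases Nat.lt_or_ge (k-1) (ν.colLen 0) with h | h
        · exact h
        · exact absurd ⟨hν, h⟩ hnot
      rw [sN_zero hcl, mul_zero]
    intro ν hν hcol
    refine ihm (m-1) (by omega) N (k-1) (by omega) (A.filter (fun ν => ν.colLen 0 ≤ k - 1))
      (fun ν => subT F (m-1) (f ν)) ?_ happ3 ν (Finset.mem_filter.mpr ⟨hν, hcol⟩)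
    intro μ hμ
    rw [Finset.mem_filter] at hμ
    obtain ⟨hμA, hμc⟩ := hμ
    obtain ⟨hr, hcl, hsym, hdeg⟩ := hmem μ hμA
    exact ⟨by omega, by omega, symN_subT hsym,
      le_trans (totalDegree_subT_le _ _) hdeg⟩
  -- divisibility for all diagrams in A
  have hdvd : ∀ ν ∈ A, Pm F m ∣ f ν := by
    have hshort : ∀ ν ∈ A, ν.colLen 0 ≤ k - 1 → Pm F m ∣ f ν := by
      intro ν hν hcol
      exact Pm_dvd hm1 (hmem ν hν).2.2.1 (by omega : m - 1 < m) (hstep1 ν hν hcol)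
    -- now handle the tall diagrams
    set tallA := A.filter (fun ν => ν.colLen 0 = k) with htallA
    have htallzero : ∀ ν ∈ tallA, psiT F (f ν) = 0 := by
      -- rewrite the main identity
      set E := ∏ i ∈ Finset.range k, (X (m - k + i) : MvPolynomial ℕ F) with hE
      set Q := ∏ i ∈ Finset.range (m - k), (X i : MvPolynomial ℕ F) with hQ
      have hshort' : ∀ ν ∈ A, ¬ (ν.colLen 0 = k) → ν.colLen 0 ≤ k - 1 := by
        intro ν hν hne
        have := (hmem ν hν).2.1
        omega
      have hsplit : ∑ ν ∈ A, f ν * sN F m k ν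
          = ∑ ν ∈ tallA, f ν * sN F m k ν
            + ∑ ν ∈ A.filter (fun ν => ¬ (ν.colLen 0 = k)), f ν * sN F m k ν := by
        rw [htallA, Finset.sum_filter_add_sum_filter_not]
      -- short part: f ν = Pm * u ν
      have hchoice : ∀ ν ∈ A.filter (fun ν => ¬ (ν.colLen 0 = k)),
          ∃ u, f ν = Pm F m * u := by
        intro ν hν
        rw [Finset.mem_filter] at hν
        exact hshort ν hν.1 (hshort' ν hν.1 hν.2)
      have hA1 : ∑ ν ∈ tallA, f ν * sN F m k ν
          = E * ∑ ν ∈ tallA, f ν * sN F m k (bar ν) := by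
        rw [Finset.mul_sum]
        apply Finset.sum_congr rfl
        intro ν hν
        rw [Finset.mem_filter] at hν
        rw [sN_col_split hν.2]
        ring
      have hA2 : ∑ ν ∈ A.filter (fun ν => ¬ (ν.colLen 0 = k)), f ν * sN F m k ν
          = E * (Q * ∑ ν ∈ A.filter (fun ν => ¬ (ν.colLen 0 = k)),
              (if h : Pm F m ∣ f ν then h.choose else 0) * sN F m k ν) := by
        rw [Finset.mul_sum, Finset.mul_sum]
        apply Finset.sum_congr rfl
        intro ν hν
        have hd : Pm F m ∣ f ν := by
          rw [Finset.mem_filter] at hν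
          exact hshort ν hν.1 (hshort' ν hν.1 hν.2)
        rw [dif_pos hd]
        have hgen : ∀ w : MvPolynomial ℕ F,
            E * (Q * (w * sN F m k ν)) = (Pm F m * w) * sN F m k ν := by
          intro w
          rw [Pm_split hk, ← hE, ← hQ]
          ring
        rw [hgen]
        exact congrArg (fun z => z * sN F m k ν) hd.choose_spec
      have key : E * (∑ ν ∈ tallA, f ν * sN F m k (bar ν)
          + Q * ∑ ν ∈ A.filter (fun ν => ¬ (ν.colLen 0 = k)),
              (if h : Pm F m ∣ f ν then h.choose else 0) * sN F m k ν) = 0 := by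
        rw [mul_add, ← hA1, ← hA2, ← hsplit]
        exact hsum
      have key2 : ∑ ν ∈ tallA, f ν * sN F m k (bar ν)
          + Q * ∑ ν ∈ A.filter (fun ν => ¬ (ν.colLen 0 = k)),
              (if h : Pm F m ∣ f ν then h.choose else 0) * sN F m k ν = 0 := by
        rcases mul_eq_zero.mp key with h | h
        · exact absurd h (E_ne_zero m k)
        · exact h
      have key3 : ∑ ν ∈ tallA, psiT F (f ν) * sN F (m-1) k (bar ν) = 0 := by
        have := congrArg (⇑(psiT F)) key2
        rw [map_add, map_mul, psiT_Q hkm1, zero_mul, add_zero, map_sum, map_zero] at this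
        rw [← this]
        apply Finset.sum_congr rfl
        intro ν hν
        rw [map_mul, psiT_sN hkm1]
      -- reindex along bar
      set B := tallA.image bar with hB
      set f' : YoungDiagram → MvPolynomial ℕ F :=
        fun μ => ∑ ν ∈ tallA.filter (fun ν' => bar ν' = μ), psiT F (f ν) with hf'
      have hfib : ∑ μ ∈ B, f' μ * sN F (m-1) k μ = 0 := by
        rw [← key3]
        have hstep : ∀ μ ∈ B, f' μ * sN F (m-1) k μ
            = ∑ ν ∈ tallA.filter (fun ν' => bar ν' = μ),
                psiT F (f ν) * sN F (m-1) k (bar ν) := by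
          intro μ hμ
          rw [hf']
          rw [Finset.sum_mul]
          apply Finset.sum_congr rfl
          intro ν hν
          rw [(Finset.mem_filter.mp hν).2]
        rw [Finset.sum_congr rfl hstep]
        exact Finset.sum_fiberwise_of_maps_to
          (fun ν hν => Finset.mem_image_of_mem bar hν) _
      have hmemB : ∀ μ ∈ B, μ.rowLen 0 ≤ (m-1) - k ∧ μ.colLen 0 ≤ k ∧ SymN (m-1) (f' μ)
          ∧ (f' μ).totalDegree ≤ N := by
        intro μ hμ
        obtain ⟨ν, hν, rfl⟩ := Finset.mem_image.mp hμ
        rw [htallA, Finset.mem_filter] at hν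
        obtain ⟨hνA, hνcol⟩ := hν
        obtain ⟨h1, h2, h3, h4⟩ := hmem ν hνA
        refine ⟨?_, bar_colLen_le h2, ?_, ?_⟩
        · apply bar_rowLen_le
          omega
        · rw [hf']
          apply SymN.finsetSum
          intro ν' hν'
          rw [Finset.mem_filter, htallA, Finset.mem_filter] at hν'
          exact symN_psiT (hmem ν' hν'.1.1).2.2.1
        · rw [hf']
          apply totalDegree_finsetSum_le
          intro ν' hν'
          rw [Finset.mem_filter, htallA, Finset.mem_filter] at hν'
          exact le_trans (totalDegree_psiT_le _) (hmem ν' hν'.1.1).2.2.2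
      have hzero := ihm (m-1) (by omega) N k (by omega) B f' hmemB hfib
      intro ν hν
      have hνmem : ν ∈ A ∧ ν.colLen 0 = k :=
        Finset.mem_filter.mp (by rw [htallA] at hν; exact hν)
      have hνA : ν ∈ A := hνmem.1
      have hνcol : ν.colLen 0 = k := hνmem.2
      have hfiber : tallA.filter (fun ν' => bar ν' = bar ν) = {ν} := by
        apply Finset.eq_singleton_iff_unique_mem.mpr
        constructor
        · exact Finset.mem_filter.mpr ⟨hν, rfl⟩
        · intro ν' hν'
          rw [Finset.mem_filter, htallA, Finset.mem_filter] at hν'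
          exact bar_inj hν'.1.2 hνcol hν'.2
      have h0 := hzero (bar ν) (Finset.mem_image_of_mem bar hν)
      rw [hf'] at h0
      simp only at h0
      rw [hfiber, Finset.sum_singleton] at h0
      exact h0
    -- conclude divisibility
    intro ν hν
    by_cases hcol : ν.colLen 0 = k
    · have h0 := htallzero ν (by rw [htallA]; exact Finset.mem_filter.mpr ⟨hν, hcol⟩)
      exact Pm_dvd hm1 (hmem ν hν).2.2.1 (by omega : (0:ℕ) < m) (subT_zero_of_psiT h0)
    · have hle : ν.colLen 0 ≤ k - 1 := by
        have := (hmem ν hν).2.1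
        omega
      exact hshort ν hν hle
  -- descent step: divide everything by Pm
  set u : YoungDiagram → MvPolynomial ℕ F :=
    fun ν => if h : Pm F m ∣ f ν then h.choose else 0 with hu
  have hfu : ∀ ν ∈ A, f ν = Pm F m * u ν := by
    intro ν hν
    rw [hu]
    simp only
    rw [dif_pos (hdvd ν hν)]
    exact (hdvd ν hν).choose_spec
  have hcancel : ∑ ν ∈ A, u ν * sN F m k ν = 0 := by
    have hPm0 : Pm F m * ∑ ν ∈ A, u ν * sN F m k ν = 0 := by
      rw [Finset.mul_sum, ← hsum]
      apply Finset.sum_congr rfl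
      intro ν hν
      rw [← mul_assoc, ← hfu ν hν]
    rcases mul_eq_zero.mp hPm0 with h | h
    · exact absurd h (Pm_ne_zero m)
    · exact h
  by_cases hcase : ∀ ν ∈ A, u ν = 0
  · intro ν hν
    rw [hfu ν hν, hcase ν hν, mul_zero]
  · push_neg at hcase
    obtain ⟨ν₀, hν₀, hu0⟩ := hcase
    have hN1 : 1 ≤ N := by
      have hdq := deg_quot hm1 hu0
      rw [← hfu ν₀ hν₀] at hdq
      have := (hmem ν₀ hν₀).2.2.2
      omega
    have hmem' : ∀ ν ∈ A, ν.rowLen 0 ≤ m - k ∧ ν.colLen 0 ≤ k ∧ SymN m (u ν)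
        ∧ (u ν).totalDegree ≤ N - 1 := by
      intro ν hν
      obtain ⟨h1, h2, h3, h4⟩ := hmem ν hν
      refine ⟨h1, h2, symN_quot h3 (hfu ν hν), ?_⟩
      by_cases h0 : u ν = 0
      · rw [h0, totalDegree_zero]
        omega
      · have hdq := deg_quot hm1 h0
        rw [← hfu ν hν] at hdq
        omega
    have hfin := ihN (N-1) (by omega) k hk A u hmem' hcancel
    intro ν hν
    rw [hfu ν hν, hfin ν hν, mul_zero]

end Star

section EIndep

noncomputable def eLam (F : Type*) [Field F] (m : ℕ) (lam : Multiset ℕ) :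
    MvPolynomial ℕ F :=
  (lam.map (eN F m)).prod

lemma symN_eLam (m : ℕ) (lam : Multiset ℕ) : SymN m (eLam F m lam) := by
  intro i j hi hj
  rw [eLam, map_multiset_prod, Multiset.map_map]
  congr 1
  apply Multiset.map_congr rfl
  intro d _
  exact symN_eN m d i j hi hj

lemma subT_eN {m : ℕ} (hm : 1 ≤ m) (d : ℕ) :
    subT F (m-1) (eN F m d) = eN F (m-1) d := by
  rw [eN, map_sum]
  have hterm : ∀ S ∈ (Finset.range m).powersetCard d,
      subT F (m-1) (∏ i ∈ S, (X i : MvPolynomial ℕ F)) =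
      if (m-1) ∈ S then 0 else ∏ i ∈ S, (X i : MvPolynomial ℕ F) := by
    intro S _
    rw [map_prod]
    split_ifs with h
    · exact Finset.prod_eq_zero h (by rw [subT, aeval_X, if_pos rfl])
    · apply Finset.prod_congr rfl
      intro i hi
      rw [subT, aeval_X, if_neg]
      rintro rfl
      exact h hi
  rw [Finset.sum_congr rfl hterm, Finset.sum_ite, Finset.sum_const_zero, zero_add, eN]
  apply Finset.sum_congr
  · ext S
    rw [Finset.mem_filter, Finset.mem_powersetCard, Finset.mem_powersetCard]
    constructor
    · rintro ⟨⟨hsub, hcard⟩, hnot⟩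
      refine ⟨?_, hcard⟩
      intro x hx
      have hx1 := Finset.mem_range.mp (hsub hx)
      rw [Finset.mem_range]
      have hne : x ≠ m - 1 := fun e => hnot (e ▸ hx)
      omega
    · rintro ⟨hsub, hcard⟩
      refine ⟨⟨?_, hcard⟩, ?_⟩
      · intro x hx
        have := Finset.mem_range.mp (hsub hx)
        rw [Finset.mem_range]
        omega
      · intro hmem
        have := Finset.mem_range.mp (hsub hmem)
        omega
  · intro S _
    rfl

lemma subT_eLam {m : ℕ} (lam : Multiset ℕ) (hm : 1 ≤ m) :
    subT F (m-1) (eLam F m lam) = eLam F (m-1) lam := by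
  rw [eLam, map_multiset_prod, Multiset.map_map, eLam]
  congr 1
  apply Multiset.map_congr rfl
  intro d _
  exact subT_eN hm d

lemma eIndep : ∀ m N : ℕ, ∀ (T : Finset (Multiset ℕ)) (c : Multiset ℕ → F),
    (∀ lam ∈ T, (∀ a ∈ lam, 1 ≤ a ∧ a ≤ m) ∧ Multiset.card lam ≤ N) →
    (∑ lam ∈ T, c lam • eLam F m lam) = 0 → ∀ lam ∈ T, c lam = 0 := by
  intro m
  induction m using Nat.strong_induction_on with
  | _ m ihm =>
  intro N
  induction N using Nat.strong_induction_on with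
  | _ N ihN =>
  intro T c hmem hsum
  by_cases hm0 : m = 0
  · subst hm0
    have hbot : ∀ lam ∈ T, lam = 0 := by
      intro lam hlam
      by_contra h
      obtain ⟨a, ha⟩ := Multiset.exists_mem_of_ne_zero h
      have := (hmem lam hlam).1 a ha
      omega
    have hsub : T ⊆ {0} := fun lam h => Finset.mem_singleton.mpr (hbot lam h)
    intro lam hlam
    have hl := hbot lam hlam
    subst hl
    rcases Finset.subset_singleton_iff.mp hsub with rfl | hT
    · exact absurd hlam (Finset.notMem_empty _)
    · rw [hT, Finset.sum_singleton] at hsum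
      have h1 : eLam F 0 (0 : Multiset ℕ) = 1 := by
        rw [eLam, Multiset.map_zero, Multiset.prod_zero]
      rw [h1] at hsum
      rcases smul_eq_zero.mp hsum with h | h
      · exact h
      · exact absurd h one_ne_zero
  have hm1 : 1 ≤ m := by omega
  have happ : ∑ lam ∈ T, c lam • eLam F (m-1) lam = 0 := by
    have h := congrArg (⇑(subT F (m-1))) hsum
    rw [map_sum, map_zero] at h
    rw [← h]
    apply Finset.sum_congr rfl
    intro lam _
    rw [map_smul, subT_eLam lam hm1]
  set T0 := T.filter (fun lam => ¬ m ∈ lam) with hT0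
  have happ0 : ∑ lam ∈ T0, c lam • eLam F (m-1) lam = 0 := by
    rw [← happ]
    apply Finset.sum_subset (Finset.filter_subset _ _)
    intro lam hlam hnot
    have hmm : m ∈ lam := by
      by_contra h
      exact hnot (Finset.mem_filter.mpr ⟨hlam, h⟩)
    have hfac : eLam F (m-1) lam = 0 := by
      rw [eLam, ← Multiset.prod_map_erase (f := eN F (m-1)) hmm,
        eN_zero_of_lt (by omega), zero_mul]
    rw [hfac, smul_zero]
  have hzero0 : ∀ lam ∈ T0, c lam = 0 := by
    refine ihm (m-1) (by omega) N T0 c ?_ happ0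
    intro lam hlam
    rw [hT0, Finset.mem_filter] at hlam
    obtain ⟨h1, h2⟩ := hmem lam hlam.1
    refine ⟨?_, h2⟩
    intro a ha
    have := h1 a ha
    have hne : a ≠ m := fun e => hlam.2 (e ▸ ha)
    omega
  intro lam hlam
  by_cases hmm : m ∈ lam
  swap
  · exact hzero0 lam (Finset.mem_filter.mpr ⟨hlam, hmm⟩)
  set T1 := T.filter (fun lam => m ∈ lam) with hT1
  have hsum1 : ∑ lam ∈ T1, c lam • eLam F m lam = 0 := by
    rw [← hsum]
    apply Finset.sum_subset (Finset.filter_subset _ _)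
    intro lam' hlam' hnot
    have h0 : lam' ∈ T0 := Finset.mem_filter.mpr ⟨hlam', by
      intro hx
      exact hnot (Finset.mem_filter.mpr ⟨hlam', hx⟩)⟩
    rw [hzero0 lam' h0, zero_smul]
  have hfact : ∑ lam' ∈ T1, c lam' • eLam F m (lam'.erase m) = 0 := by
    have hP : Pm F m * ∑ lam' ∈ T1, c lam' • eLam F m (lam'.erase m) = 0 := by
      rw [Finset.mul_sum, ← hsum1]
      apply Finset.sum_congr rfl
      intro lam' hlam'
      have hm' : m ∈ lam' := by
        rw [hT1, Finset.mem_filter] at hlam'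
        exact hlam'.2
      rw [mul_smul_comm]
      congr 1
      rw [eLam, eLam, ← Multiset.prod_map_erase (f := eN F m) hm', eN_self]
    rcases mul_eq_zero.mp hP with h | h
    · exact absurd h (Pm_ne_zero m)
    · exact h
  have himg : ∑ mu ∈ T1.image (fun lam' => lam'.erase m),
      (c (m ::ₘ mu)) • eLam F m mu = 0 := by
    rw [Finset.sum_image ?inj]
    case inj =>
      intro x hx y hy hxy
      have hx' : m ∈ x := by
        rw [hT1, Finset.mem_coe, Finset.mem_filter] at hx
        exact hx.2
      have hy' : m ∈ y := by
        rw [hT1, Finset.mem_coe, Finset.mem_filter] at hy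
        exact hy.2
      calc x = m ::ₘ x.erase m := (Multiset.cons_erase hx').symm
        _ = m ::ₘ y.erase m := by rw [show x.erase m = y.erase m from hxy]
        _ = y := Multiset.cons_erase hy'
    rw [← hfact]
    apply Finset.sum_congr rfl
    intro lam' hlam'
    have hm' : m ∈ lam' := by
      rw [hT1, Finset.mem_filter] at hlam'
      exact hlam'.2
    rw [Multiset.cons_erase hm']
  have hN1 : 1 ≤ N := by
    have h1 : 0 < Multiset.card lam := Multiset.card_pos.mpr (by
      intro h
      rw [h] at hmm
      exact absurd hmm (Multiset.notMem_zero m))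
    have := (hmem lam hlam).2
    omega
  have hz := ihN (N-1) (by omega) (T1.image (fun lam' => lam'.erase m))
    (fun mu => c (m ::ₘ mu)) ?memcond himg
  case memcond =>
    intro mu hmu
    obtain ⟨lam', hlam', rfl⟩ := Finset.mem_image.mp hmu
    have hl' := hmem lam' (Finset.filter_subset _ _ hlam')
    have hm' : m ∈ lam' := by
      rw [hT1, Finset.mem_filter] at hlam'
      exact hlam'.2
    constructor
    · intro a ha
      exact hl'.1 a (Multiset.mem_of_mem_erase ha)
    · have hcard := Multiset.card_erase_of_mem hm'
      rw [hcard, Nat.pred_eq_sub_one]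
      have := hl'.2
      omega
  have hres := hz (lam.erase m)
    (Finset.mem_image_of_mem _ (Finset.mem_filter.mpr ⟨hlam, hmm⟩))
  beta_reduce at hres
  rw [Multiset.cons_erase hmm] at hres
  exact hres

end EIndep

section Transfer

lemma rename_val_esymm (m d : ℕ) :
    rename (Fin.val : Fin m → ℕ) (esymm (Fin m) F d) = eN F m d := by
  rw [esymm, map_sum, eN]
  refine Finset.sum_bij'
    (fun t (_ : t ∈ Finset.univ.powersetCard d) => t.image (Fin.val))
    (fun S hS => S.attachFin (fun x hx =>
      Finset.mem_range.mp ((Finset.mem_powersetCard.mp hS).1 hx)))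
    ?_ ?_ ?_ ?_ ?_
  · intro t ht
    rw [Finset.mem_powersetCard]
    constructor
    · intro x hx
      obtain ⟨i, _, rfl⟩ := Finset.mem_image.mp hx
      exact Finset.mem_range.mpr i.isLt
    · rw [Finset.card_image_of_injective _ Fin.val_injective,
        (Finset.mem_powersetCard.mp ht).2]
  · intro S hS
    rw [Finset.mem_powersetCard]
    refine ⟨Finset.subset_univ _, ?_⟩
    rw [Finset.card_attachFin, (Finset.mem_powersetCard.mp hS).2]
  · intro t ht
    ext a
    rw [Finset.mem_attachFin]
    constructor
    · intro h
      obtain ⟨i, hi, he⟩ := Finset.mem_image.mp h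
      rwa [Fin.val_injective he] at hi
    · intro h
      exact Finset.mem_image_of_mem _ h
  · intro S hS
    ext x
    constructor
    · intro h
      obtain ⟨a, ha, rfl⟩ := Finset.mem_image.mp h
      exact (Finset.mem_attachFin _).mp ha
    · intro h
      have hx : x < m := Finset.mem_range.mp ((Finset.mem_powersetCard.mp hS).1 h)
      exact Finset.mem_image.mpr ⟨⟨x, hx⟩, (Finset.mem_attachFin _).mpr h, rfl⟩
  · intro t ht
    beta_reduce
    rw [map_prod, Finset.prod_image (fun a _ b _ h => Fin.val_injective h)]
    apply Finset.prod_congr rfl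
    intro i _
    rw [rename_X]

lemma rename_val_schur {m k : ℕ} (hk : k ≤ m) (ν : YoungDiagram) :
    rename (Fin.val : Fin m → ℕ)
      (schurPoly F m ν k (fun i => ⟨m - k + (i : ℕ), by have := i.isLt; omega⟩))
      = sN F m k ν := by
  rw [schurPoly, map_sum, sN]
  apply Finset.sum_congr rfl
  intro T _
  rw [map_prod]
  apply Finset.prod_congr rfl
  intro a _
  rw [rename_X]

end Transfer

end LAux

theorem L_set_linear_independent (F : Type*) [Field F] [CharZero F]
    (m k t : ℕ) (hk : k ≤ m) :
    LinearIndependent F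
      (fun p : {p : Multiset ℕ × YoungDiagram //
          (∀ a ∈ p.1, 0 < a ∧ a ≤ m) ∧
          p.2.rowLen 0 ≤ m - k ∧ p.2.colLen 0 ≤ k ∧
          ((Multiset.card p.1 : ℤ) ≤
            if p.2.rowLen 0 < m - k then (t : ℤ) else (t : ℤ) - 1)} =>
        (p.1.1.map fun d => MvPolynomial.esymm (Fin m) F d).prod *
          schurPoly F m p.1.2 k
            (fun i => ⟨m - k + (i : ℕ), by have := i.isLt; omega⟩)) := by
  classical
  rw [linearIndependent_iff']
  intro s g hsum p hp
  have hsum' : ∑ q ∈ s, g q • (LAux.eLam F m q.1.1 * LAux.sN F m k q.1.2) = 0 := by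
    have h := congrArg (⇑(MvPolynomial.rename (Fin.val : Fin m → ℕ))) hsum
    rw [map_sum, map_zero] at h
    rw [← h]
    apply Finset.sum_congr rfl
    intro q _
    have h1 : MvPolynomial.rename (Fin.val : Fin m → ℕ)
        ((q.1.1.map (fun d => MvPolynomial.esymm (Fin m) F d)).prod)
        = LAux.eLam F m q.1.1 := by
      rw [map_multiset_prod, Multiset.map_map, LAux.eLam]
      congr 1
      apply Multiset.map_congr rfl
      intro d _
      exact LAux.rename_val_esymm m d
    have h2 : MvPolynomial.rename (Fin.val : Fin m → ℕ)
        (schurPoly F m q.1.2 k (fun i => ⟨m - k + (i : ℕ), by have := i.isLt; omega⟩))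
        = LAux.sN F m k q.1.2 := LAux.rename_val_schur hk q.1.2
    rw [map_smul, map_mul, h1, h2]
  set A := s.image (fun q => q.1.2) with hA
  set fc : YoungDiagram → MvPolynomial ℕ F :=
    fun ν => ∑ q ∈ s.filter (fun q => q.1.2 = ν), g q • LAux.eLam F m q.1.1 with hfc
  have hgroup : ∑ ν ∈ A, fc ν * LAux.sN F m k ν = 0 := by
    rw [← hsum']
    have hstep : ∀ ν ∈ A, fc ν * LAux.sN F m k ν
        = ∑ q ∈ s.filter (fun q => q.1.2 = ν),
            g q • (LAux.eLam F m q.1.1 * LAux.sN F m k q.1.2) := by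
      intro ν _
      rw [hfc]
      beta_reduce
      rw [Finset.sum_mul]
      apply Finset.sum_congr rfl
      intro q hq
      rw [smul_mul_assoc, (Finset.mem_filter.mp hq).2]
    rw [Finset.sum_congr rfl hstep]
    exact Finset.sum_fiberwise_of_maps_to (fun q hq => Finset.mem_image_of_mem _ hq) _
  have hfc0 : ∀ ν ∈ A, fc ν = 0 := by
    refine LAux.star m (A.sup (fun ν => (fc ν).totalDegree)) k hk A fc ?_ hgroup
    intro ν hν
    have hsup := Finset.le_sup (f := fun ν => (fc ν).totalDegree) hν
    obtain ⟨q, hq, rfl⟩ := Finset.mem_image.mp hν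
    refine ⟨q.2.2.1, q.2.2.2.1, ?_, hsup⟩
    rw [hfc]
    apply LAux.SymN.finsetSum
    intro q' _
    exact LAux.SymN.smul (LAux.symN_eLam m q'.1.1)
  have hfp := hfc0 p.1.2 (Finset.mem_image_of_mem _ hp)
  rw [hfc] at hfp
  beta_reduce at hfp
  set s2 := s.filter (fun q => q.1.2 = p.1.2) with hs2
  set T := s2.image (fun q => q.1.1) with hT
  set cc : Multiset ℕ → F :=
    fun mu => ∑ q ∈ s2.filter (fun q => q.1.1 = mu), g q with hcc
  have hgroup2 : ∑ mu ∈ T, cc mu • LAux.eLam F m mu = 0 := by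
    rw [← hfp]
    have hstep : ∀ mu ∈ T, cc mu • LAux.eLam F m mu
        = ∑ q ∈ s2.filter (fun q => q.1.1 = mu), g q • LAux.eLam F m q.1.1 := by
      intro mu _
      rw [hcc]
      beta_reduce
      rw [Finset.sum_smul]
      apply Finset.sum_congr rfl
      intro q hq
      rw [(Finset.mem_filter.mp hq).2]
    rw [Finset.sum_congr rfl hstep]
    exact Finset.sum_fiberwise_of_maps_to (fun q hq => Finset.mem_image_of_mem _ hq) _
  have hcc0 : ∀ mu ∈ T, cc mu = 0 := by
    refine LAux.eIndep m (T.sup Multiset.card) T cc ?_ hgroup2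
    intro mu hmu
    have hsup := Finset.le_sup (f := Multiset.card) hmu
    obtain ⟨q, hq, rfl⟩ := Finset.mem_image.mp hmu
    exact ⟨fun a ha => ⟨(q.2.1 a ha).1, (q.2.1 a ha).2⟩, hsup⟩
  have hp2 := hcc0 p.1.1
    (Finset.mem_image_of_mem _ (Finset.mem_filter.mpr ⟨hp, rfl⟩))
  rw [hcc] at hp2
  beta_reduce at hp2
  have hfiber : s2.filter (fun q => q.1.1 = p.1.1) = {p} := by
    apply Finset.eq_singleton_iff_unique_mem.mpr
    constructor
    · exact Finset.mem_filter.mpr ⟨Finset.mem_filter.mpr ⟨hp, rfl⟩, rfl⟩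
    · intro q hq
      rw [Finset.mem_filter, hs2, Finset.mem_filter] at hq
      apply Subtype.ext
      apply Prod.ext
      · exact hq.2
      · exact hq.1.2
  rw [hfiber, Finset.sum_singleton] at hp2
  exact hp2
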